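/- Let k ≥ 2, 2 ≤ ℓ ≤ k, and let H be a k-uniform hypergraph on vertex set V = M_1 ∪ ⋯ ∪ M_ℓ, where {M_1,…,M_ℓ} is the unique perfect matching of H. Then the number of edges of H that intersect all of M_1,…,M_ℓ is at most b_{k,ℓ} = ((ℓ-1)/ℓ) Σ_{i=0}^{ℓ-1} (-1)^i C(ℓ,i) C(k(ℓ-i),k). -/

import Mathlib

open Finset

section Aux
set_option linter.unusedSectionVars false
variable {α : Type*} [DecidableEq α] (k l : ℕ) [NeZero l]

/-- start of block `d` -/
def bStart (a : Fin l → ℕ) (d : Fin l) : ℕ := ∑ d' ∈ univ.filter (· < d), a d'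

/-- block `d` inside `Fin k` -/
def blk (a : Fin l → ℕ) (d : Fin l) : Finset (Fin k) :=
  univ.filter (fun p => bStart l a d ≤ (p : ℕ) ∧ (p : ℕ) < bStart l a d + a d)

lemma bStart_add_le (a : Fin l → ℕ) (hsum : ∑ j, a j = k) (d : Fin l) :
    bStart l a d + a d ≤ k := by
  have h1 : insert d (univ.filter (· < d)) ⊆ univ := subset_univ _
  have hd : d ∉ univ.filter (· < d) := by simp
  calc bStart l a d + a d = ∑ d' ∈ insert d (univ.filter (· < d)), a d' := by
        rw [sum_insert hd, bStart, Nat.add_comm]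
    _ ≤ ∑ j, a j := sum_le_sum_of_subset h1
    _ = k := hsum

lemma blk_card (a : Fin l → ℕ) (hsum : ∑ j, a j = k) (d : Fin l) :
    (blk k l a d).card = a d := by
  have hle := bStart_add_le k l a hsum d
  have : (blk k l a d).card = (Finset.Ico (bStart l a d) (bStart l a d + a d)).card := by
    refine card_bij (fun p _ => (p : ℕ)) ?_ ?_ ?_
    · intro p hp; simp only [blk, mem_filter] at hp; simp [Finset.mem_Ico, hp.2]
    · intro p hp q hq h; exact Fin.ext h
    · intro m hm
      simp only [Finset.mem_Ico] at hm
      exact ⟨⟨m, by omega⟩, by simp [blk, hm.1, hm.2], rfl⟩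
  rw [this, Nat.card_Ico]; omega

lemma bStart_mono (a : Fin l → ℕ) {d d' : Fin l} (h : d < d') :
    bStart l a d + a d ≤ bStart l a d' := by
  have hsub : insert d (univ.filter (· < d)) ⊆ univ.filter (· < d') := by
    intro x hx
    simp only [mem_insert, mem_filter, mem_univ, true_and] at hx ⊢
    rcases hx with rfl | hx
    · exact h
    · exact lt_trans hx h
  have hd : d ∉ univ.filter (· < d) := by simp
  calc bStart l a d + a d = ∑ d' ∈ insert d (univ.filter (· < d)), a d' := by
        rw [sum_insert hd, bStart, Nat.add_comm]
    _ ≤ bStart l a d' := sum_le_sum_of_subset hsub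

lemma blk_disjoint (a : Fin l → ℕ) {d d' : Fin l} (h : d ≠ d') :
    Disjoint (blk k l a d) (blk k l a d') := by
  rw [Finset.disjoint_left]
  intro p hp hp'
  simp only [blk, mem_filter] at hp hp'
  rcases lt_or_gt_of_ne h with hlt | hlt
  · have := bStart_mono l a hlt; omega
  · have := bStart_mono l a hlt; omega

lemma blk_union (a : Fin l → ℕ) (hsum : ∑ j, a j = k) :
    univ.biUnion (blk k l a) = (univ : Finset (Fin k)) := by
  apply Finset.eq_univ_of_card
  rw [card_biUnion (fun d _ d' _ h => blk_disjoint k l a h)]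
  simp only [blk_card k l a hsum]
  simp [hsum]

end Aux

section CFlags
set_option linter.unusedSectionVars false
variable {α : Type*} [DecidableEq α] (k l : ℕ) [NeZero l] (M : Fin l → Finset α)

/-- flags: a composition (bounded function) together with orderings of each row -/
abbrev CFlag := (Fin l → Fin (k+1)) × (∀ i : Fin l, Fin k ≃ {x : α // x ∈ M i})

noncomputable instance : Fintype (CFlag k l M) := by
  unfold CFlag; infer_instance

/-- composition values of a flag -/
def av (f : CFlag k l M) : Fin l → ℕ := fun j => (f.1 j : ℕ)

/-- the part of class `c` inside row `i` -/
def prt (f : CFlag k l M) (c i : Fin l) : Finset α :=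
  (blk k l (av k l M f) (i - c)).image (fun p => ((f.2 i p : {x : α // x ∈ M i}) : α))

/-- class `c` of a flag -/
def cls (f : CFlag k l M) (c : Fin l) : Finset α := univ.biUnion (fun i => prt k l M f c i)

/-- good flags : genuine compositions -/
noncomputable def good : Finset (CFlag k l M) :=
  univ.filter (fun f => (∀ j, 1 ≤ av k l M f j) ∧ ∑ j, av k l M f j = k)


lemma prt_subset (f : CFlag k l M) (c i : Fin l) : prt k l M f c i ⊆ M i := by
  intro x hx
  simp only [prt, mem_image] at hx
  obtain ⟨p, _, rfl⟩ := hx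
  exact (f.2 i p).2

lemma prt_card (f : CFlag k l M) (hf : f ∈ good k l M) (c i : Fin l) :
    (prt k l M f c i).card = av k l M f (i - c) := by
  simp only [good, mem_filter] at hf
  have hinj : Function.Injective (fun p => ((f.2 i p : {x : α // x ∈ M i}) : α)) :=
    fun p q hpq => (f.2 i).injective (Subtype.val_injective hpq)
  rw [prt, card_image_of_injective _ hinj, blk_card k l _ hf.2.2]

lemma cls_inter_row (hdisj : ∀ i j, i ≠ j → Disjoint (M i) (M j)) (f : CFlag k l M) (c i : Fin l) :
    cls k l M f c ∩ M i = prt k l M f c i := by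
  ext x
  simp only [mem_inter, cls, mem_biUnion, mem_univ, true_and]
  constructor
  · rintro ⟨⟨j, hj⟩, hxi⟩
    rcases eq_or_ne j i with rfl | hne
    · exact hj
    · exact absurd hxi (Finset.disjoint_left.mp (hdisj j i hne) (prt_subset k l M f c j hj))
  · intro hx
    exact ⟨⟨i, hx⟩, prt_subset k l M f c i hx⟩

lemma cls_subset (f : CFlag k l M) (c : Fin l) : cls k l M f c ⊆ univ.biUnion M := by
  intro x hx
  simp only [cls, mem_biUnion, mem_univ, true_and] at hx ⊢
  obtain ⟨i, hi⟩ := hx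
  exact ⟨i, prt_subset k l M f c i hi⟩

lemma cls_card (hdisj : ∀ i j, i ≠ j → Disjoint (M i) (M j)) (f : CFlag k l M) (hf : f ∈ good k l M) (c : Fin l) :
    (cls k l M f c).card = k := by
  have hdisj' : ∀ i ∈ (univ : Finset (Fin l)), ∀ j ∈ univ, i ≠ j →
      Disjoint (prt k l M f c i) (prt k l M f c j) := fun i _ j _ hij =>
    (hdisj i j hij).mono (prt_subset k l M f c i) (prt_subset k l M f c j)
  rw [cls, card_biUnion hdisj']
  simp only [prt_card k l M f hf]
  have : ∑ i, av k l M f (i - c) = ∑ j, av k l M f j :=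
    Fintype.sum_equiv (Equiv.subRight c) _ _ (fun i => rfl)
  rw [this]
  simp only [good, mem_filter] at hf
  exact hf.2.2

lemma cls_crossing (hdisj : ∀ i j, i ≠ j → Disjoint (M i) (M j)) (f : CFlag k l M) (hf : f ∈ good k l M) (c i : Fin l) :
    (cls k l M f c ∩ M i).Nonempty := by
  rw [cls_inter_row k l M hdisj f c i, ← card_pos, prt_card k l M f hf]
  simp only [good, mem_filter] at hf
  exact hf.2.1 _

lemma cls_disjoint (hdisj : ∀ i j, i ≠ j → Disjoint (M i) (M j)) (f : CFlag k l M) {c c' : Fin l} (h : c ≠ c') :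
    Disjoint (cls k l M f c) (cls k l M f c') := by
  rw [Finset.disjoint_left]
  intro x hx hx'
  simp only [cls, mem_biUnion, mem_univ, true_and] at hx hx'
  obtain ⟨i, hi⟩ := hx
  obtain ⟨j, hj⟩ := hx'
  rcases eq_or_ne i j with rfl | hne
  · -- same row: blocks disjoint
    simp only [prt, mem_image] at hi hj
    obtain ⟨p, hp, hpx⟩ := hi
    obtain ⟨q, hq, hqx⟩ := hj
    have : p = q := by
      have := hpx.trans hqx.symm
      exact (f.2 i).injective (Subtype.val_injective this)
    subst this
    have hdd : i - c ≠ i - c' := fun hcon => h (sub_right_injective hcon)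
    exact Finset.disjoint_left.mp (blk_disjoint k l _ hdd) hp hq
  · exact Finset.disjoint_left.mp (hdisj i j hne)
      (prt_subset k l M f c i hi) (prt_subset k l M f c' j hj)

lemma cls_union (hdisj : ∀ i j, i ≠ j → Disjoint (M i) (M j)) (hcard : ∀ i, (M i).card = k) (f : CFlag k l M) (hf : f ∈ good k l M) :
    univ.biUnion (cls k l M f) = univ.biUnion M := by
  apply Finset.eq_of_subset_of_card_le
  · intro x hx
    simp only [mem_biUnion, mem_univ, true_and] at hx
    obtain ⟨c, hc⟩ := hx
    exact cls_subset k l M f c hc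
  · have h1 : (univ.biUnion M).card = l * k := by
      rw [card_biUnion (fun i _ j _ hij => hdisj i j hij)]
      simp [hcard, card_univ]
    have h2 : (univ.biUnion (cls k l M f)).card = l * k := by
      rw [card_biUnion (fun c _ c' _ h => cls_disjoint k l M hdisj f h)]
      simp only [cls_card k l M hdisj f hf, card_univ]
      simp
    omega
end CFlags

section Perm
variable {γ : Type*} [Fintype γ] [DecidableEq γ]

lemma exists_perm_image {B B' : Finset γ} (h : B.card = B'.card) :
    ∃ τ : γ ≃ γ, B.image ⇑τ = B' := by
  have h1 : Fintype.card {x // x ∈ B} = Fintype.card {x // x ∈ B'} := by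
    simp [Fintype.card_coe, h]
  have h2 : Fintype.card {x // ¬ x ∈ B} = Fintype.card {x // ¬ x ∈ B'} := by
    rw [Fintype.card_subtype_compl, Fintype.card_subtype_compl]
    simp [Fintype.card_coe, h]
  let e₁ : {x // x ∈ B} ≃ {x // x ∈ B'} := Fintype.equivOfCardEq h1
  let e₂ : {x // ¬ x ∈ B} ≃ {x // ¬ x ∈ B'} := Fintype.equivOfCardEq h2
  refine ⟨(Equiv.sumCompl (· ∈ B)).symm.trans ((e₁.sumCongr e₂).trans
    (Equiv.sumCompl (· ∈ B'))), ?_⟩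
  apply Finset.eq_of_subset_of_card_le
  · intro y hy
    simp only [mem_image] at hy
    obtain ⟨x, hx, rfl⟩ := hy
    simp only [Equiv.trans_apply, Equiv.sumCompl_symm_apply_of_pos hx,
      Equiv.sumCongr_apply, Sum.map_inl, Equiv.sumCompl_apply_inl]
    exact (e₁ ⟨x, hx⟩).2
  · rw [card_image_of_injective _ (Equiv.injective _), h]
end Perm

section RowCount
variable {α : Type*} [DecidableEq α] (k : ℕ)

/-- reference block `[0,b)` in `Fin k` -/
def refB (b : ℕ) : Finset (Fin k) := univ.filter (fun p => (p : ℕ) < b)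

lemma refB_card {b : ℕ} (hb : b ≤ k) : (refB k b).card = b := by
  have h : (refB k b).card = (Finset.range b).card := by
    refine card_bij (fun p _ => (p : ℕ)) ?_ ?_ ?_
    · intro p hp; simp only [refB, mem_filter] at hp; simp [Finset.mem_range, hp.2]
    · intro p _ q _ h; exact Fin.ext h
    · intro m hm
      simp only [Finset.mem_range] at hm
      exact ⟨⟨m, by omega⟩, by simp [refB, hm], rfl⟩
  rw [h, Finset.card_range]

/-- the row-symmetry count -/
def rsym (b : ℕ) : ℕ :=
  ((univ : Finset (Fin k ≃ Fin k)).filter (fun τ : Fin k ≃ Fin k => (refB k b).image ⇑τ = refB k b)).card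

lemma rsym_pos (b : ℕ) : 0 < rsym k b := by
  rw [rsym, card_pos]
  exact ⟨Equiv.refl _, by simp⟩

/-- The main row count: the number of equivs mapping a fixed block onto a fixed
    subset `T` of a row `s` of size `k` depends only on `T.card`. -/
lemma rowcount (s : Finset α) (hs : s.card = k) (B : Finset (Fin k)) (T : Finset α)
    (hT : T ⊆ s) (hB : B.card = T.card) :
    ((univ : Finset (Fin k ≃ {x // x ∈ s})).filter
      (fun σ => B.image (fun p => ((σ p : {x // x ∈ s}) : α)) = T)).card = rsym k T.card := by
  classical
  set b := T.card with hb
  have hTk : b ≤ k := hs ▸ Finset.card_le_card hT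
  let T' : Finset {x // x ∈ s} := univ.filter (fun x => (x : α) ∈ T)
  have hTT' : T'.image Subtype.val = T := by
    ext y
    simp only [T', mem_image, mem_filter, mem_univ, true_and]
    constructor
    · rintro ⟨x, hx, rfl⟩; exact hx
    · intro hy; exact ⟨⟨y, hT hy⟩, hy, rfl⟩
  have hT'card : T'.card = b := by
    show T'.card = T.card
    conv_rhs => rw [← hTT']
    rw [card_image_of_injective _ Subtype.val_injective]
  have himg : ∀ (σ : Fin k ≃ {x // x ∈ s}) (X : Finset (Fin k)),
      (X.image (fun p => ((σ p : {x // x ∈ s}) : α)) = T) ↔ X.image ⇑σ = T' := by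
    intro σ X
    rw [show (fun p => ((σ p : {x // x ∈ s}) : α)) = Subtype.val ∘ ⇑σ
      from rfl, ← image_image, ← hTT']
    exact ⟨fun h => Finset.image_injective Subtype.val_injective h, fun h => by rw [h]⟩
  -- fixed equivs
  let σ₁ : Fin k ≃ {x // x ∈ s} :=
    Fintype.equivOfCardEq (by simp [Fintype.card_coe, hs, Fintype.card_fin])
  let B'' : Finset (Fin k) := T'.image ⇑σ₁.symm
  have hB'' : B''.card = b := by
    rw [card_image_of_injective _ (Equiv.injective _), hT'card]
  obtain ⟨τ₀, hτ₀⟩ := exists_perm_image (B := refB k b) (B' := B) (by rw [refB_card k hTk, hB])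
  obtain ⟨τ₂, hτ₂⟩ := exists_perm_image (B := refB k b) (B' := B'') (by rw [refB_card k hTk, hB''])
  let σ₀ : Fin k ≃ {x // x ∈ s} := τ₂.trans σ₁
  have hσ₀ : (refB k b).image ⇑σ₀ = T' := by
    rw [show ⇑σ₀ = ⇑σ₁ ∘ ⇑τ₂ from rfl, ← image_image, hτ₂]
    rw [show B'' = T'.image ⇑σ₁.symm from rfl, image_image]
    simp
  have hσ₀' : T'.image ⇑σ₀.symm = refB k b := by
    rw [← hσ₀, image_image]; simp
  refine card_bij' (fun σ _ => τ₀.trans (σ.trans σ₀.symm)) (fun τ _ => τ₀.symm.trans (τ.trans σ₀))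
    ?_ ?_ ?_ ?_
  · intro σ hσ
    simp only [mem_filter, mem_univ, true_and] at hσ ⊢
    rw [himg σ B] at hσ
    rw [show ⇑(τ₀.trans (σ.trans σ₀.symm)) = ⇑σ₀.symm ∘ ⇑σ ∘ ⇑τ₀ from rfl]
    rw [← image_image, ← image_image, hτ₀, hσ, hσ₀']
  · intro τ hτ
    simp only [mem_filter, mem_univ, true_and] at hτ ⊢
    rw [himg _ B]
    have h1 : B.image ⇑τ₀.symm = refB k b := by
      rw [← hτ₀, image_image]; simp
    rw [show ⇑(τ₀.symm.trans (τ.trans σ₀)) = ⇑σ₀ ∘ ⇑τ ∘ ⇑τ₀.symm from rfl]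
    rw [← image_image, ← image_image, h1, hτ, hσ₀]
  · intro σ _; ext p; simp
  · intro τ _; ext p; simp
end RowCount

section FiberCount
set_option linter.unusedSectionVars false
variable {α : Type*} [DecidableEq α] (k l : ℕ) [NeZero l] (M : Fin l → Finset α)

lemma sum_inter_rows (hdisj : ∀ i j, i ≠ j → Disjoint (M i) (M j))
    {e : Finset α} (he : e ⊆ univ.biUnion M) :
    ∑ i, (e ∩ M i).card = e.card := by
  have hbiU : univ.biUnion (fun i => e ∩ M i) = e := by
    ext x
    simp only [mem_biUnion, mem_univ, true_and, mem_inter]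
    constructor
    · rintro ⟨i, hi, _⟩; exact hi
    · intro hx
      have := he hx
      simp only [mem_biUnion, mem_univ, true_and] at this
      obtain ⟨i, hi⟩ := this
      exact ⟨i, hx, hi⟩
  conv_rhs => rw [← hbiU]
  rw [card_biUnion]
  intro i _ j _ hij
  exact (hdisj i j hij).mono inter_subset_right inter_subset_right

lemma fiber_count (hdisj : ∀ i j, i ≠ j → Disjoint (M i) (M j))
    (hcard : ∀ i, (M i).card = k)
    (e : Finset α) (he : e ⊆ univ.biUnion M) (hek : e.card = k)
    (hcross : ∀ i, (e ∩ M i).Nonempty) (c : Fin l) :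
    ((good k l M).filter (fun f => cls k l M f c = e)).card
      = ∏ i, rsym k (e ∩ M i).card := by
  classical
  have hcap : ∀ i, (e ∩ M i).card ≤ k := fun i =>
    (hcard i) ▸ Finset.card_le_card inter_subset_right
  have hsum_e : ∑ i, (e ∩ M i).card = k := by rw [sum_inter_rows l M hdisj he, hek]
  set avE : Fin l → ℕ := fun j => (e ∩ M (j + c)).card with havE
  have hsum_avE : ∑ j, avE j = k := by
    rw [← hsum_e]
    exact Fintype.sum_equiv (Equiv.addRight c) _ _ (fun j => rfl)
  set aE : Fin l → Fin (k+1) := fun j => ⟨avE j, Nat.lt_succ_of_le (hcap _)⟩ with haE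
  -- the row condition
  set C : ∀ i : Fin l, (Fin k ≃ {x : α // x ∈ M i}) → Prop := fun i σ =>
    (blk k l avE (i - c)).image (fun p => ((σ p : {x : α // x ∈ M i}) : α)) = e ∩ M i with hC
  have hstep1 : (good k l M).filter (fun f => cls k l M f c = e)
      = univ.filter (fun f : CFlag k l M => f.1 = aE ∧ ∀ i, C i (f.2 i)) := by
    ext f
    simp only [mem_filter, mem_univ, true_and]
    constructor
    · rintro ⟨hf, hcls⟩
      have hrow : ∀ i, prt k l M f c i = e ∩ M i := fun i => by
        rw [← cls_inter_row k l M hdisj f c i, hcls]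
      have hav : ∀ j, av k l M f j = avE j := by
        intro j
        have h1 := prt_card k l M f hf c (j + c)
        rw [add_sub_cancel_right, hrow] at h1
        exact h1.symm
      have hf1 : f.1 = aE := by
        funext j
        exact Fin.ext (hav j)
      refine ⟨hf1, fun i => ?_⟩
      have : av k l M f = avE := funext hav
      rw [hC]
      rw [← this]
      exact hrow i
    · rintro ⟨hf1, hrows⟩
      have hav : av k l M f = avE := by
        funext j
        simp only [av, hf1, haE]
      have hprt : ∀ i, prt k l M f c i = e ∩ M i := by
        intro i
        rw [prt, hav]
        exact hrows i
      have hgood : f ∈ good k l M := by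
        simp only [good, mem_filter, mem_univ, true_and]
        constructor
        · intro j
          rw [hav, havE]
          exact card_pos.mpr (hcross _)
        · rw [hav]; exact hsum_avE
      refine ⟨hgood, ?_⟩
      rw [cls]
      have : univ.biUnion (fun i => prt k l M f c i) = univ.biUnion (fun i => e ∩ M i) := by
        apply biUnion_congr rfl
        intro i _; exact hprt i
      rw [this]
      ext x
      simp only [mem_biUnion, mem_univ, true_and, mem_inter]
      constructor
      · rintro ⟨i, hi, _⟩; exact hi
      · intro hx
        have := he hx
        simp only [mem_biUnion, mem_univ, true_and] at this
        obtain ⟨i, hi⟩ := this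
        exact ⟨i, hx, hi⟩
  rw [hstep1]
  -- drop the pinned first component
  have hstep2 : (univ.filter (fun f : CFlag k l M => f.1 = aE ∧ ∀ i, C i (f.2 i))).card
      = (univ.filter (fun ρ : (∀ i : Fin l, Fin k ≃ {x : α // x ∈ M i}) =>
          ∀ i, C i (ρ i))).card := by
    refine card_bij' (fun f _ => f.2) (fun ρ _ => (aE, ρ)) ?_ ?_ ?_ ?_
    · intro f hf
      simp only [mem_filter, mem_univ, true_and] at hf ⊢
      exact hf.2
    · intro ρ hρ
      simp only [mem_filter, mem_univ, true_and] at hρ ⊢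
      exact hρ
    · intro f hf
      simp only [mem_filter, mem_univ, true_and] at hf
      obtain ⟨a1, ρ1⟩ := f
      obtain ⟨h1, -⟩ := hf
      simp only at h1 ⊢
      rw [h1]
    · intro ρ _; rfl
  rw [hstep2]
  -- product over rows
  have hstep3 : (univ.filter (fun ρ : (∀ i : Fin l, Fin k ≃ {x : α // x ∈ M i}) =>
      ∀ i, C i (ρ i))).card = ∏ i, (univ.filter (C i)).card := by
    rw [← Fintype.card_subtype]
    rw [Fintype.card_congr (Equiv.subtypePiEquivPi (p := C))]
    rw [Fintype.card_pi]
    congr 1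
    funext i
    rw [Fintype.card_subtype]
  rw [hstep3]
  apply Finset.prod_congr rfl
  intro i _
  have hblk : (blk k l avE (i - c)).card = (e ∩ M i).card := by
    rw [blk_card k l avE hsum_avE, havE]
    simp only [sub_add_cancel]
  exact rowcount k (M i) (hcard i) _ _ inter_subset_right hblk
end FiberCount

section Weights
set_option linter.unusedSectionVars false
variable {α : Type*} [DecidableEq α] (k l : ℕ) [NeZero l] (M : Fin l → Finset α)

/-- crossing sets -/
noncomputable def crossSets : Finset (Finset α) :=
  ((univ.biUnion M).powersetCard k).filter (fun e => ∀ i, (e ∩ M i).Nonempty)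

noncomputable def Gval (f : CFlag k l M) : ℕ := ∏ j, rsym k (av k l M f j)

lemma Gval_pos (f : CFlag k l M) : 0 < Gval k l M f :=
  Finset.prod_pos (fun j _ => rsym_pos k _)

lemma Gval_eq (hdisj : ∀ i j, i ≠ j → Disjoint (M i) (M j))
    (f : CFlag k l M) (hf : f ∈ good k l M) (c : Fin l) :
    ∏ i, rsym k ((cls k l M f c ∩ M i).card) = Gval k l M f := by
  have h : ∀ i, (cls k l M f c ∩ M i).card = av k l M f (i - c) := fun i => by
    rw [cls_inter_row k l M hdisj f c i, prt_card k l M f hf c i]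
  simp_rw [h]
  exact Fintype.prod_equiv (Equiv.subRight c) _ _ (fun i => rfl)

lemma cls_mem_crossSets (hdisj : ∀ i j, i ≠ j → Disjoint (M i) (M j))
    (hcard : ∀ i, (M i).card = k) (f : CFlag k l M) (hf : f ∈ good k l M) (c : Fin l) :
    cls k l M f c ∈ crossSets k l M := by
  simp only [crossSets, mem_filter, mem_powersetCard]
  exact ⟨⟨cls_subset k l M f c, cls_card k l M hdisj f hf c⟩,
    fun i => cls_crossing k l M hdisj f hf c i⟩

lemma fiber_weight (hdisj : ∀ i j, i ≠ j → Disjoint (M i) (M j))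
    (hcard : ∀ i, (M i).card = k) {e : Finset α} (he : e ∈ crossSets k l M) (c : Fin l) :
    ∑ f ∈ (good k l M).filter (fun f => cls k l M f c = e), (1 : ℚ) / (Gval k l M f) = 1 := by
  simp only [crossSets, mem_filter, mem_powersetCard] at he
  obtain ⟨⟨heV, hek⟩, hcross⟩ := he
  have hG : ∀ f ∈ (good k l M).filter (fun fial => cls k l M fial c = e),
      (1 : ℚ) / (Gval k l M f) = 1 / (∏ i, rsym k (e ∩ M i).card) := by
    intro f hf
    simp only [mem_filter] at hf
    rw [← Gval_eq k l M hdisj f hf.1 c, hf.2]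
  rw [sum_congr rfl hG, sum_const,
    fiber_count k l M hdisj hcard e heV hek hcross c, nsmul_eq_mul, mul_one_div]
  apply div_self
  have : 0 < ∏ i, rsym k (e ∩ M i).card := Finset.prod_pos (fun i _ => rsym_pos k _)
  exact_mod_cast this.ne'

lemma global_sum (hdisj : ∀ i j, i ≠ j → Disjoint (M i) (M j))
    (hcard : ∀ i, (M i).card = k) (c : Fin l) (h : Finset α → ℚ) :
    ∑ f ∈ good k l M, h (cls k l M f c) / (Gval k l M f) = ∑ e ∈ crossSets k l M, h e := by
  rw [← sum_fiberwise_of_maps_to (fun f hf => cls_mem_crossSets k l M hdisj hcard f hf c) (fun f => h (cls k l M f c) / (Gval k l M f))]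
  apply sum_congr rfl
  intro e he
  have : ∀ f ∈ (good k l M).filter (fun f => cls k l M f c = e),
      h (cls k l M f c) / (Gval k l M f) = h e * (1 / (Gval k l M f)) := by
    intro f hf
    simp only [mem_filter] at hf
    rw [hf.2, mul_one_div]
  rw [sum_congr rfl this, ← mul_sum, fiber_weight k l M hdisj hcard he c, mul_one]

end Weights

section Uniq
set_option linter.unusedSectionVars false
variable {α : Type*} [DecidableEq α] (k l : ℕ) [NeZero l] (M : Fin l → Finset α)

lemma exists_cls_not_mem (hl : 2 ≤ l)
    (hdisj : ∀ i j, i ≠ j → Disjoint (M i) (M j)) (hcard : ∀ i, (M i).card = k)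
    (E : Finset (Finset α))
    (huniq : ∀ P : Finset (Finset α),
      P ⊆ E → (∀ e ∈ P, ∀ e' ∈ P, e ≠ e' → Disjoint e e') → P.biUnion id = univ.biUnion M →
        P = Finset.univ.image M)
    (f : CFlag k l M) (hf : f ∈ good k l M) : ∃ c, cls k l M f c ∉ E := by
  by_contra hcon
  push_neg at hcon
  set P : Finset (Finset α) := univ.image (cls k l M f) with hP
  have h1 : P ⊆ E := by
    intro e he
    simp only [hP, mem_image] at he
    obtain ⟨c, _, rfl⟩ := he
    exact hcon c
  have h2 : ∀ e ∈ P, ∀ e' ∈ P, e ≠ e' → Disjoint e e' := by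
    intro e he e' he' hne
    simp only [hP, mem_image] at he he'
    obtain ⟨c, _, rfl⟩ := he
    obtain ⟨c', _, rfl⟩ := he'
    exact cls_disjoint k l M hdisj f (fun hcc => hne (by rw [hcc]))
  have h3 : P.biUnion id = univ.biUnion M := by
    rw [← cls_union k l M hdisj hcard f hf]
    ext x
    simp only [hP, mem_biUnion, mem_image, id, mem_univ, true_and]
    constructor
    · rintro ⟨e, ⟨c, rfl⟩, hx⟩; exact ⟨c, hx⟩
    · rintro ⟨c, hx⟩; exact ⟨cls k l M f c, ⟨c, rfl⟩, hx⟩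
  have h4 := huniq P h1 h2 h3
  set i0 : Fin l := ⟨0, by omega⟩ with hi0
  set i1 : Fin l := ⟨1, by omega⟩ with hi1
  have hne01 : i0 ≠ i1 := by
    simp only [hi0, hi1, ne_eq, Fin.mk.injEq]
    omega
  have hM0 : M i0 ∈ P := by
    rw [h4]
    exact mem_image_of_mem M (mem_univ i0)
  simp only [hP, mem_image, mem_univ, true_and] at hM0
  obtain ⟨c, hc⟩ := hM0
  have hx := cls_crossing k l M hdisj f hf c i1
  rw [hc] at hx
  obtain ⟨x, hx⟩ := hx
  rw [mem_inter] at hx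
  exact Finset.disjoint_left.mp (hdisj i0 i1 hne01) hx.1 hx.2

end Uniq

section InclExcl
set_option linter.unusedSectionVars false
variable {α : Type*} [DecidableEq α] (k l : ℕ) [NeZero l] (M : Fin l → Finset α)

lemma crossSets_card (hk : 0 < k)
    (hdisj : ∀ i j, i ≠ j → Disjoint (M i) (M j)) (hcard : ∀ i, (M i).card = k) :
    ((crossSets k l M).card : ℚ)
      = ∑ i ∈ Finset.range l, (-1 : ℚ) ^ i * (l.choose i) * ((k * (l - i)).choose k) := by
  classical
  set V : Finset α := univ.biUnion M with hV
  have hVcard : V.card = l * k := by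
    rw [hV, card_biUnion (fun i _ j _ hij => hdisj i j hij)]
    simp [hcard, card_univ]
  set pk : Finset (Finset α) := V.powersetCard k with hpk
  -- step B : card as indicator sum
  have hB : ((crossSets k l M).card : ℚ)
      = ∑ e ∈ pk, (if (∀ i, (e ∩ M i).Nonempty) then (1 : ℚ) else 0) := by
    rw [crossSets, ← sum_filter]
    simp
    rfl
  rw [hB]
  -- step A : indicator as signed sum over powersets
  have hA : ∀ e ∈ pk, (if (∀ i, (e ∩ M i).Nonempty) then (1 : ℚ) else 0)
      = ∑ S ∈ (univ.filter (fun i => e ∩ M i = ∅)).powerset, (-1 : ℚ) ^ S.card := by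
    intro e _
    set Z : Finset (Fin l) := univ.filter (fun i => e ∩ M i = ∅) with hZ
    have hZiff : (∀ i, (e ∩ M i).Nonempty) ↔ Z = ∅ := by
      constructor
      · intro h
        rw [hZ, filter_eq_empty_iff]
        intro i _
        exact Finset.nonempty_iff_ne_empty.mp (h i)
      · intro h i
        have hiZ : i ∉ Z := by rw [h]; exact notMem_empty i
        simp only [hZ, mem_filter, mem_univ, true_and] at hiZ
        exact Finset.nonempty_iff_ne_empty.mpr hiZ
    have := Finset.sum_powerset_neg_one_pow_card (x := Z)
    have hq : ∑ S ∈ Z.powerset, (-1 : ℚ) ^ S.card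
        = ((∑ S ∈ Z.powerset, (-1 : ℤ) ^ S.card : ℤ) : ℚ) := by push_cast; ring_nf
    rw [hq, this]
    by_cases hcase : Z = ∅ <;> simp [hcase, hZiff]
  rw [sum_congr rfl hA]
  -- step C : extend and swap
  have hC : ∀ e ∈ pk, ∑ S ∈ (univ.filter (fun i => e ∩ M i = ∅)).powerset, (-1 : ℚ) ^ S.card
      = ∑ S ∈ (univ : Finset (Fin l)).powerset,
          (if (∀ i ∈ S, e ∩ M i = ∅) then (-1 : ℚ) ^ S.card else 0) := by
    intro e _
    rw [← sum_filter]
    apply sum_congr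
    · ext S
      simp only [mem_filter, mem_powerset, subset_univ, true_and, Finset.subset_iff, mem_filter,
        mem_univ, true_and]
      tauto
    · intros; rfl
  rw [sum_congr rfl hC, sum_comm]
  -- step D : inner counts
  have hD : ∀ S : Finset (Fin l), S ∈ (univ : Finset (Fin l)).powerset →
      ∑ e ∈ pk, (if (∀ i ∈ S, e ∩ M i = ∅) then (-1 : ℚ) ^ S.card else 0)
        = (-1 : ℚ) ^ S.card * ((k * (l - S.card)).choose k) := by
    intro S _
    rw [← sum_filter, sum_const]
    have hset : pk.filter (fun e => ∀ i ∈ S, e ∩ M i = ∅)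
        = (V \ S.biUnion M).powersetCard k := by
      ext e
      simp only [mem_filter, hpk, mem_powersetCard]
      constructor
      · rintro ⟨⟨heV, hek⟩, hemp⟩
        refine ⟨?_, hek⟩
        intro x hx
        rw [mem_sdiff]
        refine ⟨heV hx, ?_⟩
        intro hmem
        rw [mem_biUnion] at hmem
        obtain ⟨i, hiS, hxi⟩ := hmem
        have : x ∈ e ∩ M i := mem_inter.mpr ⟨hx, hxi⟩
        rw [hemp i hiS] at this
        exact notMem_empty x this
      · rintro ⟨heW, hek⟩
        refine ⟨⟨fun x hx => (mem_sdiff.mp (heW hx)).1, hek⟩, ?_⟩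
        intro i hiS
        rw [Finset.eq_empty_iff_forall_notMem]
        intro x hx
        rw [mem_inter] at hx
        exact (mem_sdiff.mp (heW hx.1)).2 (mem_biUnion.mpr ⟨i, hiS, hx.2⟩)
    have hScard : S.card ≤ l := by
      simpa using card_le_univ S
    have hWcard : (V \ S.biUnion M).card = k * (l - S.card) := by
      have hsub : S.biUnion M ⊆ V := by
        intro x hx
        rw [mem_biUnion] at hx
        obtain ⟨i, _, hxi⟩ := hx
        rw [hV, mem_biUnion]
        exact ⟨i, mem_univ i, hxi⟩
      rw [card_sdiff_of_subset hsub, hVcard, card_biUnion (fun i _ j _ hij => hdisj i j hij)]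
      have : ∑ i ∈ S, (M i).card = S.card * k := by
        rw [sum_congr rfl (fun i _ => hcard i), sum_const, smul_eq_mul]
      rw [this, mul_comm k (l - S.card), tsub_mul, mul_comm l k, mul_comm S.card k,
        mul_comm k l]
    rw [hset, card_powersetCard, hWcard]
    rw [nsmul_eq_mul]
    ring
  rw [sum_congr rfl hD]
  -- step E : group by cardinality
  have hE := Finset.sum_powerset_apply_card
    (f := fun i => (-1 : ℚ) ^ i * ((k * (l - i)).choose k)) (x := (univ : Finset (Fin l)))
  rw [hE, card_univ, Fintype.card_fin, Finset.sum_range_succ]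
  have hlast : (0 : ℚ) = (l.choose l) • ((-1 : ℚ) ^ l * ((k * (l - l)).choose k)) := by
    rw [Nat.sub_self, Nat.mul_zero, Nat.choose_eq_zero_of_lt hk]
    simp
  rw [← hlast, add_zero]
  apply sum_congr rfl
  intro i _
  rw [nsmul_eq_mul]
  ring
end InclExcl

def b (k l : ℕ) : ℚ :=
  ((l - 1 : ℚ) / l) *
    ∑ i ∈ Finset.range l, (-1 : ℚ) ^ i * (l.choose i) * ((k * (l - i)).choose k)

theorem stmt_12 {α : Type*} [DecidableEq α] (k l : ℕ) (hk : 2 ≤ k) (hl : 2 ≤ l) (hlk : l ≤ k)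
    (M : Fin l → Finset α)
    (hdisj : ∀ i j, i ≠ j → Disjoint (M i) (M j))
    (hcard : ∀ i, (M i).card = k)
    (V : Finset α) (hV : V = Finset.univ.biUnion M)
    (E : Finset (Finset α))
    (hE : ∀ e ∈ E, e ⊆ V ∧ e.card = k)
    (hM : ∀ i, M i ∈ E)
    (huniq : ∀ P : Finset (Finset α),
      P ⊆ E → (∀ e ∈ P, ∀ e' ∈ P, e ≠ e' → Disjoint e e') → P.biUnion id = V →
        P = Finset.univ.image M) :
    ((E.filter (fun e => ∀ i, (e ∩ M i).Nonempty)).card : ℚ) ≤ b k l := by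
  classical
  haveI : NeZero l := ⟨by omega⟩
  subst hV
  set B : Finset (Finset α) := E.filter (fun e => ∀ i, (e ∩ M i).Nonempty) with hBdef
  have hBX : B ⊆ crossSets k l M := by
    intro e he
    rw [hBdef, mem_filter] at he
    obtain ⟨heE, hecross⟩ := he
    rw [crossSets, mem_filter, mem_powersetCard]
    exact ⟨⟨(hE e heE).1, (hE e heE).2⟩, hecross⟩
  set c0 : Fin l := ⟨0, by omega⟩ with hc0
  -- key 1
  have key1 : ∀ c : Fin l, ∑ f ∈ good k l M,
      (if cls k l M f c ∈ B then (1 : ℚ) else 0) / (Gval k l M f) = (B.card : ℚ) := by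
    intro c
    rw [global_sum k l M hdisj hcard c (fun e => if e ∈ B then (1 : ℚ) else 0), ← sum_filter]
    have : (crossSets k l M).filter (fun e => e ∈ B) = B := by
      ext e
      rw [mem_filter]
      exact ⟨fun h => h.2, fun h => ⟨hBX h, h⟩⟩
    rw [this, sum_const, nsmul_eq_mul, mul_one]
  -- key 2
  have key2 : ∑ f ∈ good k l M, (1 : ℚ) / (Gval k l M f) = ((crossSets k l M).card : ℚ) := by
    have := global_sum k l M hdisj hcard c0 (fun _ => (1 : ℚ))
    rw [this, sum_const, nsmul_eq_mul, mul_one]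
  -- key 3 : per-flag bound
  have key3 : ∀ f ∈ good k l M,
      ∑ c : Fin l, (if cls k l M f c ∈ B then (1 : ℚ) else 0) ≤ (l : ℚ) - 1 := by
    intro f hf
    obtain ⟨cbad, hcbad⟩ := exists_cls_not_mem k l M hl hdisj hcard E huniq f hf
    have hnotB : cls k l M f cbad ∉ B := fun hmem => hcbad (mem_filter.mp hmem).1
    have hle : ∀ c : Fin l, (if cls k l M f c ∈ B then (1 : ℚ) else 0)
        ≤ 1 - (if c = cbad then 1 else 0) := by
      intro c
      by_cases hc : c = cbad
      · subst hc
        simp [hnotB]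
      · simp [hc]
        split <;> norm_num
    calc ∑ c : Fin l, (if cls k l M f c ∈ B then (1 : ℚ) else 0)
        ≤ ∑ c : Fin l, (1 - (if c = cbad then 1 else 0)) := sum_le_sum (fun c _ => hle c)
      _ = (l : ℚ) - 1 := by
          rw [sum_sub_distrib, sum_const, card_univ, Fintype.card_fin, sum_ite_eq' univ cbad]
          simp
  -- assemble
  have hGpos : ∀ f ∈ good k l M, (0 : ℚ) < (Gval k l M f) := fun f _ => by
    exact_mod_cast Gval_pos k l M f
  have main : (l : ℚ) * (B.card : ℚ) ≤ ((l : ℚ) - 1) * ((crossSets k l M).card : ℚ) := by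
    have h1 : (l : ℚ) * (B.card : ℚ)
        = ∑ c : Fin l, ∑ f ∈ good k l M,
            (if cls k l M f c ∈ B then (1 : ℚ) else 0) / (Gval k l M f) := by
      rw [sum_congr rfl (fun c _ => key1 c), sum_const, card_univ, Fintype.card_fin,
        nsmul_eq_mul]
    rw [h1, sum_comm]
    have h2 : ∀ f ∈ good k l M,
        ∑ c : Fin l, (if cls k l M f c ∈ B then (1 : ℚ) else 0) / (Gval k l M f)
          ≤ ((l : ℚ) - 1) * ((1 : ℚ) / (Gval k l M f)) := by
      intro f hf
      rw [← sum_div, mul_one_div]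
      exact (div_le_div_iff_of_pos_right (hGpos f hf)).mpr (key3 f hf)
    calc ∑ f ∈ good k l M, ∑ c : Fin l,
          (if cls k l M f c ∈ B then (1 : ℚ) else 0) / (Gval k l M f)
        ≤ ∑ f ∈ good k l M, ((l : ℚ) - 1) * ((1 : ℚ) / (Gval k l M f)) :=
          sum_le_sum h2
      _ = ((l : ℚ) - 1) * ((crossSets k l M).card : ℚ) := by rw [← mul_sum, key2]
  have hX := crossSets_card k l M (by omega) hdisj hcard
  rw [b, ← hX]
  rw [div_mul_eq_mul_div, le_div_iff₀ (by positivity : (0 : ℚ) < (l : ℚ))]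
  calc (B.card : ℚ) * (l : ℚ) = (l : ℚ) * (B.card : ℚ) := by ring
    _ ≤ ((l : ℚ) - 1) * ((crossSets k l M).card : ℚ) := main
    _ = ((l : ℚ) - 1) * ((crossSets k l M).card : ℚ) := rfl
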